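/- Every John domain D ⊂ ℝ² (or in a metric space) has porous boundary: if D is a John domain with center z₀ and constant C > 0, then there exists ξ ∈ (0, 1) such that for every sufficiently small r > 0 and every x ∈ ∂D there is y ∈ B(x, r) with B(y, ξ r) ∩ ∂D = ∅. -/

import Mathlib

open Metric

/-- The boundary of a John domain in the plane is porous. -/
theorem stmt7 (D : Set ℂ) (hD : IsOpen D) (hconn : IsConnected D)
    (z₀ : ℂ) (hz₀ : z₀ ∈ D) (C : ℝ) (hC : 0 < C)
    (hJohn : ∀ z ∈ frontier D, ∃ γ : Path z₀ z,
      Set.range γ \ {z} ⊆ D ∧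
      ∀ t : unitInterval, C * dist (γ t) z ≤ infDist (γ t) (frontier D)) :
    ∃ ξ : ℝ, 0 < ξ ∧ ξ < 1 ∧ ∃ r₀ > (0 : ℝ), ∀ r : ℝ, 0 < r → r < r₀ →
      ∀ x ∈ frontier D, ∃ y ∈ ball x r, ball y (ξ * r) ∩ frontier D = ∅ := by
  refine ⟨min (C / 2) (1 / 2), lt_min (by linarith) (by norm_num),
    lt_of_le_of_lt (min_le_right _ _) (by norm_num), ?_⟩
  rcases Set.eq_empty_or_nonempty (frontier D) with hfe | hfne
  · exact ⟨1, one_pos, fun r hr hr1 x hx => ⟨x, mem_ball_self hr, by rw [hfe]; simp⟩⟩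
  -- frontier nonempty: distance from z₀ to frontier is positive
  have hz₀f : z₀ ∉ frontier D := by
    rw [hD.frontier_eq]
    exact fun h => h.2 hz₀
  have hδ : 0 < infDist z₀ (frontier D) :=
    (isClosed_frontier.notMem_iff_infDist_pos hfne).1 hz₀f
  refine ⟨infDist z₀ (frontier D), hδ, fun r hr hrδ x hx => ?_⟩
  obtain ⟨γ, -, hγ⟩ := hJohn x hx
  -- find t with dist (γ t) x = r/2
  have hcont : ContinuousOn (fun t => dist (γ.extend t) x) (Set.Icc 0 1) :=
    (continuous_dist.comp (γ.continuous_extend.prodMk continuous_const)).continuousOn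
  have hx0 : dist z₀ x ≥ r / 2 := by
    have : infDist z₀ (frontier D) ≤ dist z₀ x := infDist_le_dist_of_mem hx
    linarith
  have hmem : r / 2 ∈ Set.Icc (dist (γ.extend 1) x) (dist (γ.extend 0) x) := by
    rw [γ.extend_zero, γ.extend_one]
    simp only [dist_self]
    exact ⟨by linarith, hx0⟩
  obtain ⟨t, ht01, ht⟩ := intermediate_value_Icc' (by norm_num : (0:ℝ) ≤ 1) hcont hmem
  set y := γ.extend t with hy
  have hyx : dist y x = r / 2 := ht
  refine ⟨y, by rw [mem_ball, hyx]; linarith, ?_⟩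
  have hJ : C * dist y x ≤ infDist y (frontier D) := by
    have := hγ ⟨t, ht01⟩
    rwa [show γ ⟨t, ht01⟩ = y from (γ.extend_apply ht01).symm] at this
  ext p
  simp only [Set.mem_inter_iff, mem_ball, Set.mem_empty_iff_false, iff_false, not_and]
  intro hp hpf
  have h1 : infDist y (frontier D) ≤ dist p y := by
    rw [dist_comm]; exact infDist_le_dist_of_mem hpf
  have h2 : min (C / 2) (1 / 2) * r ≤ C * (r / 2) := by
    have := min_le_left (C / 2) (1 / 2 : ℝ)
    nlinarith
  rw [hyx] at hJ
  linarith
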